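/- The cyclic code C = ⟨(z+1)² + v²⟩ of length 4 over R = Z₂[v]/(v³) is not a (1,1)-reversible complement code. -/

import Mathlib

open Polynomial

noncomputable section

/-- The finite chain ring `R = Z₂[v]/(v³) = Z₂ + vZ₂ + v²Z₂`, `v³ = 0`. -/
abbrev Rv : Type := Polynomial (ZMod 2) ⧸ Ideal.span {(X : Polynomial (ZMod 2)) ^ 3}

/-- The element `v` of `Rv`. -/
def vv : Rv := Ideal.Quotient.mk _ X

instance : (Ideal.span {(X : Polynomial Rv) ^ 4 - 1}).IsTwoSided :=
  @Ideal.instIsTwoSided_1 (Polynomial Rv) _ (Ideal.span {(X : Polynomial Rv) ^ 4 - 1})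

/-- The ambient ring `R[z]/(z⁴ − 1)` of cyclic codes of length 4 over `Rv`. -/
abbrev Q4 : Type := Polynomial Rv ⧸ Ideal.span {(X : Polynomial Rv) ^ 4 - 1}

/-- The element `z` of `Q4`. -/
def zz : Q4 := Ideal.Quotient.mk _ X

/-- The constant `r` viewed in `Q4`. -/
def cst (r : Rv) : Q4 := Ideal.Quotient.mk _ (C r)

/-- The element of `Q4` corresponding to the length-4 codeword `a`. -/
def word4 (a : Fin 4 → Rv) : Q4 := Ideal.Quotient.mk _ (∑ i : Fin 4, C (a i) * X ^ (i : ℕ))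

/-- `I` is a `(1,1)`-reversible complement cyclic code: it contains the
`(1,1)`-reverse complement `∑ᵢ (1 + a_{3−i}) zⁱ` of each codeword `∑ᵢ aᵢ zⁱ`. -/
def IsRC11 (I : Ideal Q4) : Prop :=
  ∀ a : Fin 4 → Rv, word4 a ∈ I → word4 (fun i => 1 + a (Fin.rev i)) ∈ I

section

abbrev RvCR : CommRing Rv := Ideal.Quotient.commRing _

attribute [local instance] RvCR

lemma h2poly : (2 : Polynomial (ZMod 2)) = 0 := by
  have h : (1 + 1 : ZMod 2) = 0 := by decide
  have : (2 : Polynomial (ZMod 2)) = C 1 + C 1 := by rw [C_1]; ring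
  rw [this, ← C_add, h, C_0]

lemma h2Rv : (2 : Rv) = 0 := by
  have : (2 : Rv) = Ideal.Quotient.mk _ (2 : Polynomial (ZMod 2)) := by rw [map_ofNat]
  rw [this, h2poly, map_zero]

lemma hv3 : vv ^ 3 = 0 := by
  rw [vv, ← map_pow, Ideal.Quotient.eq_zero_iff_mem]
  exact Ideal.subset_span rfl

lemma hv2 : vv ^ 2 ≠ 0 := by
  intro h
  rw [vv, ← map_pow, Ideal.Quotient.eq_zero_iff_mem, Ideal.mem_span_singleton] at h
  have h2 : ((X : Polynomial (ZMod 2)) ^ 2) ≠ 0 := pow_ne_zero _ X_ne_zero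
  have := Polynomial.degree_le_of_dvd h h2
  rw [degree_X_pow, degree_X_pow] at this
  exact absurd this (by decide)

abbrev T : Type := Polynomial Rv ⧸ Ideal.span {(X : Polynomial Rv) ^ 2}

def mkT : Polynomial Rv →+* T := Ideal.Quotient.mk _
def aT : Rv →+* T := mkT.comp Polynomial.C
def ee : T := mkT X
def uu : T := aT vv
def ss : T := 1 + uu + ee

lemma h2T : (2 : T) = 0 := by
  have : (2 : T) = aT 2 := by rw [map_ofNat]
  rw [this, h2Rv, map_zero]

lemma hee : ee * ee = 0 := by
  rw [ee, ← map_mul, ← sq]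
  show Ideal.Quotient.mk (Ideal.span {(X : Polynomial Rv) ^ 2}) (X ^ 2) = 0
  rw [Ideal.Quotient.eq_zero_iff_mem]
  exact Ideal.subset_span rfl

lemma huu3 : uu ^ 3 = 0 := by rw [uu, ← map_pow, hv3, map_zero]

lemma hs2 : ss ^ 2 = 1 + uu ^ 2 := by
  rw [ss]; linear_combination hee + (uu + ee + uu * ee) * h2T

lemma hs4 : ss ^ 4 = 1 := by
  have h : ss ^ 4 = (ss ^ 2) ^ 2 := by ring
  rw [h, hs2]
  linear_combination uu ^ 2 * h2T + uu * huu3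

lemma hgen : (ss + 1) ^ 2 + aT (vv ^ 2) = 0 := by
  rw [map_pow, ← uu, ss]
  linear_combination hee + (2 + 2 * uu + 2 * ee + uu * ee + uu ^ 2) * h2T

lemma hsum : 1 + ss + ss ^ 2 + ss ^ 3 = uu ^ 2 * ee := by
  have h3 : ss ^ 3 = ss * ss ^ 2 := by ring
  rw [h3, hs2, ss]
  linear_combination (2 + uu + ee + uu ^ 2) * h2T + huu3

def phi : Q4 →+* T :=
  Ideal.Quotient.lift _ (Polynomial.eval₂RingHom aT ss) (by
    intro p hp
    rw [Ideal.mem_span_singleton] at hp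
    obtain ⟨q, rfl⟩ := hp
    rw [map_mul, map_sub, map_pow, map_one, coe_eval₂RingHom, eval₂_X, hs4, sub_self]; exact zero_mul (eval₂ aT ss q))

lemma phi_mk (p : Polynomial Rv) : phi (Ideal.Quotient.mk _ p) = Polynomial.eval₂ aT ss p :=
  Ideal.Quotient.lift_mk _ _ _

lemma phi_zz : phi zz = ss := by rw [zz, phi_mk, eval₂_X]
lemma phi_cst (r : Rv) : phi (cst r) = aT r := by rw [cst, phi_mk, eval₂_C]

lemma phi_ones : phi (word4 (fun _ => 1)) = uu ^ 2 * ee := by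
  rw [word4, phi_mk]
  rw [show Polynomial.eval₂ aT ss = (Polynomial.eval₂RingHom aT ss : Polynomial Rv → T) from rfl]
  rw [map_sum]
  simp only [coe_eval₂RingHom, eval₂_mul, eval₂_C, map_one, eval₂_X_pow, one_mul]
  rw [Fin.sum_univ_four]
  simpa using hsum

lemma hne : uu ^ 2 * ee ≠ 0 := by
  intro h
  rw [uu, ← map_pow, ee, aT, RingHom.comp_apply] at h
  rw [show (mkT (Polynomial.C (vv ^ 2)) * mkT X : T) = mkT (Polynomial.C (vv ^ 2) * X) from (map_mul _ _ _).symm] at h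
  rw [mkT] at h
  rw [Ideal.Quotient.eq_zero_iff_mem, Ideal.mem_span_singleton] at h
  obtain ⟨q, hq⟩ := h
  have hc := congrArg (fun p => Polynomial.coeff p 1) hq
  simp only [Polynomial.coeff_mul_X, Polynomial.coeff_C_zero] at hc
  rw [show (X : Polynomial Rv) ^ 2 * q = q * X ^ 2 from mul_comm _ _, Polynomial.coeff_mul_X_pow'] at hc
  rw [if_neg (by norm_num)] at hc
  exact hv2 hc

end

/-- The cyclic code `C = ⟨(z+1)² + v²⟩` of length 4 over `Z₂[v]/(v³)` is
not a `(1,1)`-reversible complement code. -/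
theorem stmt13 : ¬ IsRC11 (Ideal.span {(zz + 1) ^ 2 + cst (vv ^ 2)}) := by
  letI : CommRing Rv := RvCR
  intro H
  have h0 : word4 (fun _ => (0 : Rv)) ∈ Ideal.span {(zz + 1) ^ 2 + cst (vv ^ 2)} := by
    have : word4 (fun _ => (0 : Rv)) = 0 := by simp [word4]
    rw [this]; exact Ideal.zero_mem _
  have h1 := H _ h0
  have hfun : (fun i : Fin 4 => 1 + (fun _ : Fin 4 => (0 : Rv)) (Fin.rev i)) = fun _ => (1 : Rv) := by
    funext i; simp
  rw [hfun, Ideal.mem_span_singleton'] at h1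
  obtain ⟨q, hq⟩ := h1
  have hphi := congrArg phi hq
  rw [map_mul, phi_ones] at hphi
  have hg : phi ((zz + 1) ^ 2 + cst (vv ^ 2)) = 0 := by
    rw [map_add, map_pow, map_add, map_one, phi_zz, phi_cst, hgen]
  rw [hg] at hphi
  exact hne (hphi.symm.trans (mul_zero (phi q)))
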